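/- Let P_N be the equally-spaced partitions x_{N,n} = nT/N. Suppose f : [0,T] → ℝ satisfies f(0) = 0, lim_{x→0⁺} f(x) = f(0), lim_{x→T⁻} f(x) = f(T), f has finite quadratic variation V²(f) with respect to (P_N), and, moreover, for every sequence of partitions of [0,T] that is quasi-uniform with constant C_qu ≤ 2 and whose mesh tends to 0, f has finite quadratic variation with respect to that sequence equal to the same value V²(f). Then lim_{N→∞} σ̂_CV²(N) = V²(f)/T. -/

import Mathlib

open Filter Asymptotics Finset

/-- `Δx_{N,n} = x_{N,n+1} - x_{N,n}`. -/
noncomputable def deltaX (pts : ℕ → ℕ → ℝ) (N n : ℕ) : ℝ := pts N (n + 1) - pts N n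

/-- The LOO-CV scale estimator for the Brownian motion kernel, written as a function of the
values `g n = f(x_{N,n})`. -/
noncomputable def sigmaCVg (pts : ℕ → ℕ → ℝ) (N : ℕ) (g : ℕ → ℝ) : ℝ :=
  (1 / (N : ℝ)) *
    ((pts N 2 * g 1 - pts N 1 * g 2) ^ 2 / (pts N 1 * pts N 2 * deltaX pts N 1)
      + ∑ n ∈ Finset.Icc 2 (N - 1),
          (deltaX pts N (n - 1) * (g (n + 1) - g n) - deltaX pts N n * (g n - g (n - 1))) ^ 2 /
            ((deltaX pts N n + deltaX pts N (n - 1)) * deltaX pts N n * deltaX pts N (n - 1))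
      + (g N - g (N - 1)) ^ 2 / deltaX pts N (N - 1))

/-- The LOO-CV scale estimator `σ̂_CV²(N)` for data `f(x_{N,1}), …, f(x_{N,N})`. -/
noncomputable def sigmaCV (pts : ℕ → ℕ → ℝ) (f : ℝ → ℝ) (N : ℕ) : ℝ :=
  sigmaCVg pts N fun n => f (pts N n)

/-- The equally-spaced partition `x_{N,n} = nT/N` of `[0,T]`. -/
noncomputable def eqPts (T : ℝ) : ℕ → ℕ → ℝ := fun N n => (n : ℝ) * T / (N : ℝ)


def ME (N : ℕ) : ℕ := max 1 ((N + 1) / 2)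
def MO (N : ℕ) : ℕ := N / 2 + 1


lemma keyIdentity (g : ℕ → ℝ) (hg0 : g 0 = 0) :
    ∀ N, 2 ≤ N →
    (2 * g 1 - g 2) ^ 2 / 2
      + (∑ n ∈ Icc 2 (N - 1), (g (n + 1) - 2 * g n + g (n - 1)) ^ 2 / 2)
      + (g N - g (N - 1)) ^ 2
    = 2 * (∑ n ∈ range N, (g (n + 1) - g n) ^ 2) - (g 1) ^ 2
      - (1 / 2) * (∑ n ∈ Icc 1 (N - 1), (g (n + 1) - g (n - 1)) ^ 2) := by
  intro N hN
  induction N, hN using Nat.le_induction with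
  | base =>
      norm_num [Finset.sum_range_succ, Finset.Icc_self, hg0]
      ring
  | succ n hn ih =>
      obtain ⟨m, rfl⟩ : ∃ m, n = m + 2 := ⟨n - 2, by omega⟩
      simp only [show m + 2 + 1 - 1 = m + 2 from rfl, show m + 2 - 1 = m + 1 from rfl] at ih ⊢
      rw [Finset.sum_Icc_succ_top (show 2 ≤ m + 2 by omega),
        Finset.sum_Icc_succ_top (show 1 ≤ m + 2 by omega), Finset.sum_range_succ]
      simp only [show m + 2 - 1 = m + 1 from rfl]
      linear_combination ih

lemma clean1 (F : ℕ → ℝ) :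
    ∀ K, ∑ j ∈ range K, (F (2 * j + 2) - F (2 * j)) ^ 2
      + ∑ j ∈ range K, (F (2 * j + 3) - F (2 * j + 1)) ^ 2
      = ∑ n ∈ Icc 1 (2 * K), (F (n + 1) - F (n - 1)) ^ 2 := by
  intro K
  induction K with
  | zero => simp
  | succ k ih =>
      rw [Finset.sum_range_succ, Finset.sum_range_succ,
        show 2 * (k + 1) = 2 * k + 1 + 1 from by ring,
        Finset.sum_Icc_succ_top (by omega), Finset.sum_Icc_succ_top (by omega)]
      simp only [show 2 * k + 1 + 1 - 1 = 2 * k + 1 from rfl, show 2 * k + 1 - 1 = 2 * k from rfl,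
        show 2 * k + 1 + 1 = 2 * k + 2 from rfl, show 2 * k + 1 + 1 + 1 = 2 * k + 3 from rfl]
      linear_combination ih

lemma clean2 (F : ℕ → ℝ) :
    ∀ K, ∑ j ∈ range (K + 1), (F (2 * j + 2) - F (2 * j)) ^ 2
      + ∑ j ∈ range K, (F (2 * j + 3) - F (2 * j + 1)) ^ 2
      = ∑ n ∈ Icc 1 (2 * K + 1), (F (n + 1) - F (n - 1)) ^ 2 := by
  intro K
  induction K with
  | zero => simp
  | succ k ih =>
      rw [Finset.sum_range_succ (f := fun j => (F (2 * j + 3) - F (2 * j + 1)) ^ 2) (n := k),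
        Finset.sum_range_succ (f := fun j => (F (2 * j + 2) - F (2 * j)) ^ 2) (n := k + 1),
        show 2 * (k + 1) + 1 = 2 * k + 2 + 1 from by ring,
        Finset.sum_Icc_succ_top (by omega), Finset.sum_Icc_succ_top (by omega)]
      simp only [show 2 * k + 2 + 1 - 1 = 2 * k + 2 from rfl, show 2 * k + 2 - 1 = 2 * k + 1 from rfl,
        show 2 * k + 2 + 1 = 2 * k + 3 from rfl, show 2 * k + 2 + 1 + 1 = 2 * (k + 1) + 2 from by ring,
        show 2 * (k + 1) = 2 * k + 2 from by ring, show 2 * (k + 1) + 1 = 2 * k + 3 from by ring,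
        show 2 * (k + 1) + 3 = 2 * k + 5 from by ring]
      linear_combination ih

lemma parityIdentity (F : ℕ → ℝ) (N : ℕ) (hN : 2 ≤ N) :
    ∑ j ∈ range (ME N), (F (min (2 * (j + 1)) N) - F (min (2 * j) N)) ^ 2
      + ∑ j ∈ range (MO N), (F (min (2 * (j + 1) - 1) N) - F (min (2 * j - 1) N)) ^ 2
    = ∑ n ∈ Icc 1 (N - 1), (F (n + 1) - F (n - 1)) ^ 2
      + (F 1 - F 0) ^ 2 + (F N - F (N - 1)) ^ 2 := by
  obtain ⟨K, rfl | rfl⟩ := Nat.even_or_odd' N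
  · -- N = 2K, K ≥ 1
    obtain ⟨k, rfl⟩ : ∃ k, K = k + 1 := ⟨K - 1, by omega⟩
    have hME : ME (2 * (k + 1)) = k + 1 := by unfold ME; omega
    have hMO : MO (2 * (k + 1)) = k + 2 := by unfold MO; omega
    rw [hME, hMO]
    have h1 : ∑ j ∈ range (k + 1), (F (min (2 * (j + 1)) (2 * (k + 1))) - F (min (2 * j) (2 * (k + 1)))) ^ 2
        = ∑ j ∈ range (k + 1), (F (2 * j + 2) - F (2 * j)) ^ 2 := by
      refine Finset.sum_congr rfl fun j hj => ?_
      simp only [Finset.mem_range] at hj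
      rw [show min (2 * (j + 1)) (2 * (k + 1)) = 2 * j + 2 by omega,
        show min (2 * j) (2 * (k + 1)) = 2 * j by omega]
    rw [h1, Finset.sum_range_succ' (fun j => (F (min (2 * (j + 1) - 1) (2 * (k + 1))) - F (min (2 * j - 1) (2 * (k + 1)))) ^ 2) (k + 1),
      Finset.sum_range_succ (fun j => (F (min (2 * (j + 1 + 1) - 1) (2 * (k + 1))) - F (min (2 * (j + 1) - 1) (2 * (k + 1)))) ^ 2) k]
    have h2 : ∑ j ∈ range k, (F (min (2 * (j + 1 + 1) - 1) (2 * (k + 1))) - F (min (2 * (j + 1) - 1) (2 * (k + 1)))) ^ 2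
        = ∑ j ∈ range k, (F (2 * j + 3) - F (2 * j + 1)) ^ 2 := by
      refine Finset.sum_congr rfl fun j hj => ?_
      simp only [Finset.mem_range] at hj
      rw [show min (2 * (j + 1 + 1) - 1) (2 * (k + 1)) = 2 * j + 3 by omega,
        show min (2 * (j + 1) - 1) (2 * (k + 1)) = 2 * j + 1 by omega]
    rw [h2, show min (2 * (k + 1 + 1) - 1) (2 * (k + 1)) = 2 * (k + 1) by omega,
      show min (2 * (k + 1) - 1) (2 * (k + 1)) = 2 * k + 1 by omega,
      show min (2 * (0 + 1) - 1) (2 * (k + 1)) = 1 by omega,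
      show min (2 * 0 - 1) (2 * (k + 1)) = 0 by omega,
      show 2 * (k + 1) - 1 = 2 * k + 1 by omega]
    linear_combination clean2 F k
  · -- N = 2K+1, K ≥ 1
    obtain ⟨k, rfl⟩ : ∃ k, K = k + 1 := ⟨K - 1, by omega⟩
    have hME : ME (2 * (k + 1) + 1) = k + 2 := by unfold ME; omega
    have hMO : MO (2 * (k + 1) + 1) = k + 2 := by unfold MO; omega
    rw [hME, hMO]
    rw [Finset.sum_range_succ (fun j => (F (min (2 * (j + 1)) (2 * (k + 1) + 1)) - F (min (2 * j) (2 * (k + 1) + 1))) ^ 2) (k + 1)]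
    have h1 : ∑ j ∈ range (k + 1), (F (min (2 * (j + 1)) (2 * (k + 1) + 1)) - F (min (2 * j) (2 * (k + 1) + 1))) ^ 2
        = ∑ j ∈ range (k + 1), (F (2 * j + 2) - F (2 * j)) ^ 2 := by
      refine Finset.sum_congr rfl fun j hj => ?_
      simp only [Finset.mem_range] at hj
      rw [show min (2 * (j + 1)) (2 * (k + 1) + 1) = 2 * j + 2 by omega,
        show min (2 * j) (2 * (k + 1) + 1) = 2 * j by omega]
    rw [h1, Finset.sum_range_succ' (fun j => (F (min (2 * (j + 1) - 1) (2 * (k + 1) + 1)) - F (min (2 * j - 1) (2 * (k + 1) + 1))) ^ 2) (k + 1)]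
    have h2 : ∑ j ∈ range (k + 1), (F (min (2 * (j + 1 + 1) - 1) (2 * (k + 1) + 1)) - F (min (2 * (j + 1) - 1) (2 * (k + 1) + 1))) ^ 2
        = ∑ j ∈ range (k + 1), (F (2 * j + 3) - F (2 * j + 1)) ^ 2 := by
      refine Finset.sum_congr rfl fun j hj => ?_
      simp only [Finset.mem_range] at hj
      rw [show min (2 * (j + 1 + 1) - 1) (2 * (k + 1) + 1) = 2 * j + 3 by omega,
        show min (2 * (j + 1) - 1) (2 * (k + 1) + 1) = 2 * j + 1 by omega]
    rw [h2, show min (2 * (k + 1 + 1)) (2 * (k + 1) + 1) = 2 * (k + 1) + 1 by omega,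
      show min (2 * (k + 1)) (2 * (k + 1) + 1) = 2 * (k + 1) by omega,
      show min (2 * (0 + 1) - 1) (2 * (k + 1) + 1) = 1 by omega,
      show min (2 * 0 - 1) (2 * (k + 1) + 1) = 0 by omega,
      show 2 * (k + 1) + 1 - 1 = 2 * (k + 1) by omega]
    linear_combination clean1 F (k + 1)

noncomputable def qGen (T : ℝ) (idx : ℕ → ℕ → ℕ) (N j : ℕ) : ℝ :=
  if N = 0 then (if j = 0 then 0 else T) else ((idx N j : ℕ) : ℝ) * T / N

section qgen
variable (T : ℝ) (idx : ℕ → ℕ → ℕ) (M : ℕ → ℕ)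
variable (H0 : ∀ N, idx N 0 = 0) (HM : ∀ N, N ≠ 0 → idx N (M N) = N)
variable (Hlo : ∀ N, N ≠ 0 → ∀ n < M N, idx N n + 1 ≤ idx N (n + 1))
variable (Hhi : ∀ N, N ≠ 0 → ∀ n, idx N (n + 1) ≤ idx N n + 2)
variable (Hmono : ∀ N, N ≠ 0 → ∀ n, idx N n ≤ idx N (n + 1))
variable (HM1 : M 0 = 1)

include H0 in
lemma qGen_zero : ∀ N, qGen T idx N 0 = 0 := by
  intro N
  by_cases h : N = 0 <;> simp [qGen, h, H0 N]

include HM HM1 in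
lemma qGen_last : ∀ N, qGen T idx N (M N) = T := by
  intro N
  by_cases h : N = 0
  · subst h; simp [qGen, HM1]
  · have hN : ((N : ℕ) : ℝ) ≠ 0 := Nat.cast_ne_zero.mpr h
    simp only [qGen, if_neg h, HM N h]
    field_simp

include Hlo HM1 in
lemma qGen_mono (hT : 0 < T) : ∀ N, ∀ n < M N, qGen T idx N n < qGen T idx N (n + 1) := by
  intro N n hn
  by_cases h : N = 0
  · subst h; rw [HM1] at hn
    interval_cases n
    simp [qGen, hT]
  · have hN : (0 : ℝ) < (N : ℝ) := by exact_mod_cast Nat.pos_of_ne_zero h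
    have hTN : 0 < T / N := by positivity
    have h1 : idx N n + 1 ≤ idx N (n + 1) := Hlo N h n hn
    have h2 : ((idx N n : ℕ) : ℝ) < ((idx N (n + 1) : ℕ) : ℝ) := by exact_mod_cast h1
    simp only [qGen, if_neg h, mul_div_assoc]
    exact mul_lt_mul_of_pos_right h2 hTN

include Hlo Hhi HM1 in
lemma qGen_quasi (hT : 0 ≤ T) :
    ∀ N, ∀ m < M N, ∀ n < M N,
      qGen T idx N (m + 1) - qGen T idx N m ≤ 2 * (qGen T idx N (n + 1) - qGen T idx N n) := by
  intro N m hm n hn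
  by_cases h : N = 0
  · subst h; rw [HM1] at hm hn
    interval_cases m; interval_cases n
    simp [qGen]; linarith
  · have hN : (0 : ℝ) < (N : ℝ) := by exact_mod_cast Nat.pos_of_ne_zero h
    have hu : 0 ≤ T / N := by positivity
    have h1 : ((idx N (m + 1) : ℕ) : ℝ) ≤ (idx N m : ℕ) + 2 := by exact_mod_cast Hhi N h m
    have h2 : ((idx N n : ℕ) : ℝ) + 1 ≤ (idx N (n + 1) : ℕ) := by exact_mod_cast Hlo N h n hn
    simp only [qGen, if_neg h, mul_div_assoc]
    nlinarith [mul_le_mul_of_nonneg_right h1 hu, mul_le_mul_of_nonneg_right h2 hu]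

include Hhi Hmono in
lemma qGen_mesh (hT : 0 ≤ T) :
    Tendsto (fun N => ⨆ n ∈ Finset.range (M N), (qGen T idx N (n + 1) - qGen T idx N n))
      atTop (nhds 0) := by
  have hnn : ∀ N n, 0 ≤ qGen T idx N (n + 1) - qGen T idx N n := by
    intro N n
    by_cases h : N = 0
    · subst h; simp only [qGen, if_pos rfl]
      by_cases hn : n = 0 <;> simp [hn, hT]
    · have hN : (0 : ℝ) < (N : ℝ) := by exact_mod_cast Nat.pos_of_ne_zero h
      have hu : 0 ≤ T / N := by positivity
      have h2 : ((idx N n : ℕ) : ℝ) ≤ (idx N (n + 1) : ℕ) := by exact_mod_cast Hmono N h n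
      simp only [qGen, if_neg h, mul_div_assoc]
      nlinarith [mul_le_mul_of_nonneg_right h2 hu]
  have hub : ∀ N : ℕ, N ≠ 0 → ∀ n, qGen T idx N (n + 1) - qGen T idx N n ≤ 2 * T / N := by
    intro N h n
    have hN : (0 : ℝ) < (N : ℝ) := by exact_mod_cast Nat.pos_of_ne_zero h
    have hu : 0 ≤ T / N := by positivity
    have h1 : ((idx N (n + 1) : ℕ) : ℝ) ≤ (idx N n : ℕ) + 2 := by exact_mod_cast Hhi N h n
    simp only [qGen, if_neg h, mul_div_assoc]
    nlinarith [mul_le_mul_of_nonneg_right h1 hu]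
  apply tendsto_of_tendsto_of_tendsto_of_le_of_le' (tendsto_const_nhds (x := (0:ℝ)))
    (tendsto_const_div_atTop_nhds_zero_nat (2 * T))
  · filter_upwards with N
    exact Real.iSup_nonneg fun n => Real.iSup_nonneg fun _ => hnn N n
  · filter_upwards [eventually_ge_atTop 1] with N hN1
    have h : N ≠ 0 := by omega
    have hN : (0 : ℝ) < (N : ℝ) := by exact_mod_cast Nat.pos_of_ne_zero h
    have h20 : 0 ≤ 2 * T / N := by positivity
    exact Real.iSup_le (fun n => Real.iSup_le (fun _ => hub N h n) h20) h20

end qgen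

-- concrete index functions
def idxE (N j : ℕ) : ℕ := min (2 * j) N
def idxO (N j : ℕ) : ℕ := min (2 * j - 1) N

noncomputable def qE (T : ℝ) : ℕ → ℕ → ℝ := qGen T idxE
noncomputable def qO (T : ℝ) : ℕ → ℕ → ℝ := qGen T idxO

lemma idxE_facts :
    (∀ N, idxE N 0 = 0) ∧ (∀ N, N ≠ 0 → idxE N (ME N) = N) ∧
    (∀ N, N ≠ 0 → ∀ n < ME N, idxE N n + 1 ≤ idxE N (n + 1)) ∧
    (∀ N, N ≠ 0 → ∀ n, idxE N (n + 1) ≤ idxE N n + 2) ∧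
    (∀ N, N ≠ 0 → ∀ n, idxE N n ≤ idxE N (n + 1)) ∧ ME 0 = 1 := by
  unfold idxE ME
  refine ⟨fun N => by omega, fun N h => by omega, fun N h n hn => by omega,
    fun N h n => by omega, fun N h n => by omega, by omega⟩

lemma idxO_facts :
    (∀ N, idxO N 0 = 0) ∧ (∀ N, N ≠ 0 → idxO N (MO N) = N) ∧
    (∀ N, N ≠ 0 → ∀ n < MO N, idxO N n + 1 ≤ idxO N (n + 1)) ∧
    (∀ N, N ≠ 0 → ∀ n, idxO N (n + 1) ≤ idxO N n + 2) ∧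
    (∀ N, N ≠ 0 → ∀ n, idxO N n ≤ idxO N (n + 1)) ∧ MO 0 = 1 := by
  unfold idxO MO
  refine ⟨fun N => by omega, fun N h => by omega, fun N h n hn => by omega,
    fun N h n => by omega, fun N h n => by omega, by omega⟩

lemma deltaX_eqPts (T : ℝ) (N n : ℕ) : deltaX (eqPts T) N n = T / N := by
  simp only [deltaX, eqPts]
  push_cast
  ring

lemma sigmaCVg_simp (T : ℝ) (hT : 0 < T) (N : ℕ) (hN : 2 ≤ N) (g : ℕ → ℝ) :
    sigmaCVg (eqPts T) N g = (1 / T) * ((2 * g 1 - g 2) ^ 2 / 2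
      + (∑ n ∈ Icc 2 (N - 1), (g (n + 1) - 2 * g n + g (n - 1)) ^ 2 / 2)
      + (g N - g (N - 1)) ^ 2) := by
  have hN0 : (N : ℝ) ≠ 0 := Nat.cast_ne_zero.mpr (by omega)
  have hTN : T / (N : ℝ) ≠ 0 := div_ne_zero hT.ne' hN0
  unfold sigmaCVg
  simp only [deltaX_eqPts]
  rw [show eqPts T N 1 = T / ↑N by simp [eqPts], show eqPts T N 2 = 2 * T / ↑N by
    simp [eqPts]]
  rw [Finset.sum_congr rfl (fun n _ =>
    show (T / ↑N * (g (n + 1) - g n) - T / ↑N * (g n - g (n - 1))) ^ 2 /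
        ((T / ↑N + T / ↑N) * (T / ↑N) * (T / ↑N))
      = (g (n + 1) - 2 * g n + g (n - 1)) ^ 2 / 2 * (↑N / T) from by field_simp; ring)]
  rw [← Finset.sum_mul]
  rw [show (2 * T / ↑N * g 1 - T / ↑N * g 2) ^ 2 / (T / ↑N * (2 * T / ↑N) * (T / ↑N))
      = (2 * g 1 - g 2) ^ 2 / 2 * (↑N / T) from by field_simp,
    show (g N - g (N - 1)) ^ 2 / (T / ↑N) = (g N - g (N - 1)) ^ 2 * (↑N / T) from by
      field_simp]
  field_simp


lemma sigmaCV_simp (T : ℝ) (hT : 0 < T) (f : ℝ → ℝ) (N : ℕ) (hN : 2 ≤ N) :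
    sigmaCV (eqPts T) f N = (1 / T) * ((2 * f (eqPts T N 1) - f (eqPts T N 2)) ^ 2 / 2
      + (∑ n ∈ Icc 2 (N - 1),
          (f (eqPts T N (n + 1)) - 2 * f (eqPts T N n) + f (eqPts T N (n - 1))) ^ 2 / 2)
      + (f (eqPts T N N) - f (eqPts T N (N - 1))) ^ 2) :=
  sigmaCVg_simp T hT N hN fun n => f (eqPts T N n)

lemma qE_eqPts (T : ℝ) (N : ℕ) (hN : N ≠ 0) (j : ℕ) :
    qE T N j = eqPts T N (min (2 * j) N) := by
  simp only [qE, qGen, if_neg hN, idxE, eqPts]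

lemma qO_eqPts (T : ℝ) (N : ℕ) (hN : N ≠ 0) (j : ℕ) :
    qO T N j = eqPts T N (min (2 * j - 1) N) := by
  simp only [qO, qGen, if_neg hN, idxO, eqPts]

/-- If `f(0) = 0`, `f` is continuous at the boundary, `f` has finite quadratic variation
`V²(f)` with respect to the equally-spaced partitions, and the quadratic variation of `f`
equals the same value `V²(f)` for every sequence of partitions of `[0,T]` that is quasi-uniform
with constant `C_qu ≤ 2` and whose mesh tends to `0`, then `σ̂_CV²(N) → V²(f)/T`. -/
theorem cv_limit_quadratic_variation (T : ℝ) (hT : 0 < T) (f : ℝ → ℝ) (hf0 : f 0 = 0)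
    (hbd0 : Tendsto f (nhdsWithin 0 (Set.Ioi 0)) (nhds (f 0)))
    (hbdT : Tendsto f (nhdsWithin T (Set.Iio T)) (nhds (f T)))
    (V2 : ℝ)
    (hqv : Tendsto
      (fun N : ℕ => ∑ n ∈ Finset.range N, (f (eqPts T N (n + 1)) - f (eqPts T N n)) ^ 2)
      atTop (nhds V2))
    (hqv' : ∀ (M : ℕ → ℕ) (q : ℕ → ℕ → ℝ),
      (∀ N, q N 0 = 0) → (∀ N, q N (M N) = T) →
      (∀ N, ∀ n < M N, q N n < q N (n + 1)) →
      (∀ N, ∀ m < M N, ∀ n < M N, q N (m + 1) - q N m ≤ 2 * (q N (n + 1) - q N n)) →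
      Tendsto (fun N => ⨆ n ∈ Finset.range (M N), (q N (n + 1) - q N n)) atTop (nhds 0) →
      Tendsto (fun N => ∑ n ∈ Finset.range (M N), (f (q N (n + 1)) - f (q N n)) ^ 2)
        atTop (nhds V2)) :
    Tendsto (fun N => sigmaCV (eqPts T) f N) atTop (nhds (V2 / T)) := by
  obtain ⟨hE0, hEM, hElo, hEhi, hEmono, hEM1⟩ := idxE_facts
  obtain ⟨hO0, hOM, hOlo, hOhi, hOmono, hOM1⟩ := idxO_facts
  have hSA : Tendsto (fun N => ∑ j ∈ Finset.range (ME N),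
      (f (qE T N (j + 1)) - f (qE T N j)) ^ 2) atTop (nhds V2) :=
    hqv' ME (qE T) (qGen_zero T idxE hE0) (qGen_last T idxE ME hEM hEM1)
      (qGen_mono T idxE ME hElo hEM1 hT) (qGen_quasi T idxE ME hElo hEhi hEM1 hT.le)
      (qGen_mesh T idxE ME hEhi hEmono hT.le)
  have hSB : Tendsto (fun N => ∑ j ∈ Finset.range (MO N),
      (f (qO T N (j + 1)) - f (qO T N j)) ^ 2) atTop (nhds V2) :=
    hqv' MO (qO T) (qGen_zero T idxO hO0) (qGen_last T idxO MO hOM hOM1)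
      (qGen_mono T idxO MO hOlo hOM1 hT) (qGen_quasi T idxO MO hOlo hOhi hOM1 hT.le)
      (qGen_mesh T idxO MO hOhi hOmono hT.le)
  have hdiv : Tendsto (fun N : ℕ => T / N) atTop (nhds 0) :=
    tendsto_const_div_atTop_nhds_zero_nat T
  have hb : Tendsto (fun N : ℕ => f (eqPts T N 1)) atTop (nhds 0) := by
    have h1 : Tendsto (fun N : ℕ => eqPts T N 1) atTop (nhdsWithin 0 (Set.Ioi 0)) := by
      rw [tendsto_nhdsWithin_iff]
      constructor
      · exact hdiv.congr fun N => by simp [eqPts]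
      · filter_upwards [eventually_ge_atTop 1] with N h
        have hN : (0 : ℝ) < (N : ℝ) := by exact_mod_cast Nat.pos_of_ne_zero (by omega)
        simp only [eqPts, Nat.cast_one, one_mul, Set.mem_Ioi]
        positivity
    have := hbd0.comp h1
    rwa [hf0] at this
  have hc : Tendsto (fun N : ℕ => f (eqPts T N (N - 1))) atTop (nhds (f T)) := by
    have h1 : Tendsto (fun N : ℕ => eqPts T N (N - 1)) atTop (nhdsWithin T (Set.Iio T)) := by
      rw [tendsto_nhdsWithin_iff]
      have key : ∀ N : ℕ, 1 ≤ N → eqPts T N (N - 1) = T - T / N := by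
        intro N h
        have hN : (N : ℝ) ≠ 0 := Nat.cast_ne_zero.mpr (by omega)
        have hcast : ((N - 1 : ℕ) : ℝ) = (N : ℝ) - 1 := by
          push_cast [h]; ring
        simp only [eqPts, hcast]
        field_simp
      constructor
      · have h2 : Tendsto (fun N : ℕ => T - T / N) atTop (nhds (T - 0)) :=
          tendsto_const_nhds.sub hdiv
        rw [sub_zero] at h2
        apply h2.congr'
        filter_upwards [eventually_ge_atTop 1] with N h
        exact (key N h).symm
      · filter_upwards [eventually_ge_atTop 1] with N h
        have hN : (0 : ℝ) < (N : ℝ) := by exact_mod_cast Nat.pos_of_ne_zero (by omega)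
        rw [key N h, Set.mem_Iio]
        have : 0 < T / N := by positivity
        linarith
    exact hbdT.comp h1
  set Q : ℕ → ℝ := fun N => ∑ n ∈ Finset.range N,
    (f (eqPts T N (n + 1)) - f (eqPts T N n)) ^ 2 with hQ
  set SA : ℕ → ℝ := fun N => ∑ j ∈ Finset.range (ME N),
    (f (qE T N (j + 1)) - f (qE T N j)) ^ 2 with hSAdef
  set SB : ℕ → ℝ := fun N => ∑ j ∈ Finset.range (MO N),
    (f (qO T N (j + 1)) - f (qO T N j)) ^ 2 with hSBdef
  have hEq : ∀ᶠ N in atTop, sigmaCV (eqPts T) f N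
      = (1 / T) * (2 * Q N - (f (eqPts T N 1)) ^ 2
        - (1 / 2) * (SA N + SB N - (f (eqPts T N 1)) ^ 2
          - (f T - f (eqPts T N (N - 1))) ^ 2)) := by
    filter_upwards [eventually_ge_atTop 2] with N hN
    have hN0 : N ≠ 0 := by omega
    have hNr : (N : ℝ) ≠ 0 := Nat.cast_ne_zero.mpr hN0
    have h0 : f (eqPts T N 0) = 0 := by
      simp [eqPts, hf0]
    have hTT : f (eqPts T N N) = f T := by
      rw [show eqPts T N N = T by unfold eqPts; field_simp]
    have hg0 : (fun n => f (eqPts T N n)) 0 = 0 := h0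
    have KI := keyIdentity (fun n => f (eqPts T N n)) hg0 N hN
    have PI := parityIdentity (fun k => f (eqPts T N k)) N hN
    have hSA' : SA N = ∑ j ∈ Finset.range (ME N),
        (f (eqPts T N (min (2 * (j + 1)) N)) - f (eqPts T N (min (2 * j) N))) ^ 2 :=
      Finset.sum_congr rfl fun j _ => by rw [qE_eqPts T N hN0, qE_eqPts T N hN0]
    have hSB' : SB N = ∑ j ∈ Finset.range (MO N),
        (f (eqPts T N (min (2 * (j + 1) - 1) N)) - f (eqPts T N (min (2 * j - 1) N))) ^ 2 :=
      Finset.sum_congr rfl fun j _ => by rw [qO_eqPts T N hN0, qO_eqPts T N hN0]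
    have hS : ∑ n ∈ Icc 1 (N - 1),
        (f (eqPts T N (n + 1)) - f (eqPts T N (n - 1))) ^ 2
        = SA N + SB N - (f (eqPts T N 1) - f (eqPts T N 0)) ^ 2
          - (f (eqPts T N N) - f (eqPts T N (N - 1))) ^ 2 := by
      rw [hSA', hSB']
      linarith [PI]
    rw [sigmaCV_simp T hT f N hN, KI, hS, h0, hTT]
    ring
  have hR : Tendsto (fun N => (1 / T) * (2 * Q N - (f (eqPts T N 1)) ^ 2
      - (1 / 2) * (SA N + SB N - (f (eqPts T N 1)) ^ 2
        - (f T - f (eqPts T N (N - 1))) ^ 2))) atTop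
      (nhds ((1 / T) * (2 * V2 - 0 ^ 2
        - (1 / 2) * (V2 + V2 - 0 ^ 2 - (f T - f T) ^ 2)))) :=
    tendsto_const_nhds.mul (((hqv.const_mul 2).sub (hb.pow 2)).sub
      (tendsto_const_nhds.mul (((hSA.add hSB).sub (hb.pow 2)).sub
        ((tendsto_const_nhds.sub hc).pow 2))))
  have hval : (1 / T) * (2 * V2 - 0 ^ 2
      - (1 / 2) * (V2 + V2 - 0 ^ 2 - (f T - f T) ^ 2)) = V2 / T := by
    rw [sub_self]
    ring
  rw [hval] at hR
  exact Tendsto.congr' (hEq.mono fun N h => h.symm) hR
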